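/- Let M = ℕ with metric d(i,j) = h(min{i,j}) for i ≠ j, where h: ℕ → (1,2) is strictly increasing, and consider f ∈ TP(M) with median m of its support (i.e., ∑_{i=1}^m |f_i| ≥ ‖f‖₁/2 and ∑_{i=1}^{m−1} |f_i| < ‖f‖₁/2). Then the transportation cost norm of f equals ∑_{i=1}^{m−1} |f_i| h(i) + (‖f‖₁/2 − ∑_{i=1}^{m−1} |f_i|) h(m). -/

import Mathlib

set_option maxHeartbeats 1000000


private lemma habs_split (x : ℝ) : |x| = max x 0 + max (-x) 0 := by
  rcases le_total x 0 with hx | hx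
  · rw [abs_of_nonpos hx, max_eq_right hx, max_eq_left (by linarith : (0:ℝ) ≤ -x)]; ring
  · rw [abs_of_nonneg hx, max_eq_left hx, max_eq_right (by linarith : -x ≤ 0)]; ring

private lemma hpn_split (x : ℝ) : max x 0 - max (-x) 0 = x := by
  rcases le_total x 0 with hx | hx
  · rw [max_eq_right hx, max_eq_left (by linarith : (0:ℝ) ≤ -x)]; ring
  · rw [max_eq_left hx, max_eq_right (by linarith : -x ≤ 0)]; ring

private lemma Iic_split (f : ℕ →₀ ℝ) (m : ℕ) :
    ∑ i ∈ Finset.Iic m, |f i| = ∑ i ∈ Finset.Iio m, |f i| + |f m| := by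
  have e : Finset.Iic m = insert m (Finset.Iio m) := by
    ext x; simp only [Finset.mem_Iic, Finset.mem_insert, Finset.mem_Iio]; omega
  rw [e, Finset.sum_insert (by simp)]; ring

private lemma mem_aux (h : ℕ → ℝ) (hmono : StrictMono h) (hrange : ∀ n, 1 < h n ∧ h n < 2)
    (f : ℕ →₀ ℝ) (m : ℕ) :
    ∃ l : ℕ → ℝ, (∀ i j, |l i - l j| ≤ if i = j then 0 else h (min i j)) ∧
      ∑ i ∈ Finset.Iio m, |f i| * h i +
        ((∑ i ∈ f.support, |f i|) / 2 - ∑ i ∈ Finset.Iio m, |f i|) * h m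
        = |f.sum fun i a => l i * a| := by
  refine ⟨fun i => (if f i < 0 then (-1:ℝ) else 1) * (h (min i m) - h m / 2), ?_, ?_⟩
  · intro i j
    dsimp only
    by_cases hij : i = j
    · subst hij; simp
    · rw [if_neg hij]
      have r1 := hrange (min i m); have r2 := hrange (min j m); have rm := hrange m
      have mi1 : h (min i m) ≤ h i := hmono.monotone (min_le_left i m)
      have mi2 : h (min i m) ≤ h m := hmono.monotone (min_le_right i m)
      have mj1 : h (min j m) ≤ h j := hmono.monotone (min_le_left j m)
      have mj2 : h (min j m) ≤ h m := hmono.monotone (min_le_right j m)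
      rcases Nat.lt_or_ge i j with hlt | hge
      · rw [min_eq_left (le_of_lt hlt)]
        have ri := hrange i
        split_ifs <;> (rw [abs_le]; constructor <;> linarith)
      · have hlt' : j < i := by omega
        rw [min_eq_right (le_of_lt hlt')]
        have rj := hrange j
        split_ifs <;> (rw [abs_le]; constructor <;> linarith)
  · have hnn0 : ∀ i : ℕ, 0 ≤ h (min i m) - h m / 2 := fun i => by
      have := hrange (min i m); have := hrange m; linarith
    have hval : (f.sum fun i a => ((if f i < 0 then (-1:ℝ) else 1) * (h (min i m) - h m / 2)) * a)
        = ∑ i ∈ f.support, |f i| * (h (min i m) - h m / 2) := by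
      show (∑ i ∈ f.support, ((if f i < 0 then (-1:ℝ) else 1) * (h (min i m) - h m / 2)) * f i) = _
      refine Finset.sum_congr rfl fun i _ => ?_
      by_cases hfi : f i < 0
      · rw [if_pos hfi, abs_of_neg hfi]; ring
      · rw [if_neg hfi, abs_of_nonneg (not_lt.mp hfi)]; ring
    rw [hval, abs_of_nonneg (Finset.sum_nonneg fun i _ => mul_nonneg (abs_nonneg _) (hnn0 i))]
    have hsplit2 := Finset.sum_filter_add_sum_filter_not f.support (fun i => i < m)
      (fun i => |f i| * (h (min i m) - h m / 2))
    have hsplitS := Finset.sum_filter_add_sum_filter_not f.support (fun i => i < m)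
      (fun i => |f i|)
    have hsub : ∑ i ∈ f.support.filter (fun i => i < m), |f i| = ∑ i ∈ Finset.Iio m, |f i| :=
      Finset.sum_subset (fun x hx => Finset.mem_Iio.mpr (Finset.mem_filter.mp hx).2)
        (fun x hx hnx => by
          rw [Finsupp.notMem_support_iff.mp
            (fun hs => hnx (Finset.mem_filter.mpr ⟨hs, Finset.mem_Iio.mp hx⟩)), abs_zero])
    have hsubh : ∑ i ∈ f.support.filter (fun i => i < m), |f i| * h i
        = ∑ i ∈ Finset.Iio m, |f i| * h i :=
      Finset.sum_subset (fun x hx => Finset.mem_Iio.mpr (Finset.mem_filter.mp hx).2)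
        (fun x hx hnx => by
          rw [Finsupp.notMem_support_iff.mp
            (fun hs => hnx (Finset.mem_filter.mpr ⟨hs, Finset.mem_Iio.mp hx⟩)), abs_zero,
            zero_mul])
    have p1 : ∑ i ∈ f.support.filter (fun i => i < m), |f i| * (h (min i m) - h m / 2)
        = (∑ i ∈ f.support.filter (fun i => i < m), |f i| * h i)
          - (∑ i ∈ f.support.filter (fun i => i < m), |f i|) * (h m / 2) := by
      rw [Finset.sum_mul, ← Finset.sum_sub_distrib]
      refine Finset.sum_congr rfl fun i hi => ?_
      rw [min_eq_left (le_of_lt (Finset.mem_filter.mp hi).2)]; ring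
    have p2 : ∑ i ∈ f.support.filter (fun i => ¬ i < m), |f i| * (h (min i m) - h m / 2)
        = (∑ i ∈ f.support.filter (fun i => ¬ i < m), |f i|) * h m
          - (∑ i ∈ f.support.filter (fun i => ¬ i < m), |f i|) * (h m / 2) := by
      rw [Finset.sum_mul, Finset.sum_mul, ← Finset.sum_sub_distrib]
      refine Finset.sum_congr rfl fun i hi => ?_
      rw [min_eq_right (not_lt.mp (Finset.mem_filter.mp hi).2)]; ring
    rw [← hsubh, ← hsplitS, ← hsub, ← hsplit2, p1, p2]
    ring


private lemma habs_split' (x : ℝ) : |x| = max x 0 + max (-x) 0 := by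
  rcases le_total x 0 with hx | hx
  · rw [abs_of_nonpos hx, max_eq_right hx, max_eq_left (by linarith : (0:ℝ) ≤ -x)]; ring
  · rw [abs_of_nonneg hx, max_eq_left hx, max_eq_right (by linarith : -x ≤ 0)]; ring

private lemma hpn_split' (x : ℝ) : max x 0 - max (-x) 0 = x := by
  rcases le_total x 0 with hx | hx
  · rw [max_eq_right hx, max_eq_left (by linarith : (0:ℝ) ≤ -x)]; ring
  · rw [max_eq_left hx, max_eq_right (by linarith : -x ≤ 0)]; ring

private lemma Iic_split' (f : ℕ →₀ ℝ) (m : ℕ) :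
    ∑ i ∈ Finset.Iic m, |f i| = ∑ i ∈ Finset.Iio m, |f i| + |f m| := by
  have e : Finset.Iic m = insert m (Finset.Iio m) := by
    ext x; simp only [Finset.mem_Iic, Finset.mem_insert, Finset.mem_Iio]; omega
  rw [e, Finset.sum_insert (by simp)]; ring

private lemma ub_aux (h : ℕ → ℝ) (hmono : StrictMono h) (hrange : ∀ n, 1 < h n ∧ h n < 2)
    (f : ℕ →₀ ℝ) (hf : f.sum (fun _ r => r) = 0) (m : ℕ)
    (hm1 : (∑ i ∈ f.support, |f i|) / 2 ≤ ∑ i ∈ Finset.Iic m, |f i|)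
    (hm2 : ∑ i ∈ Finset.Iio m, |f i| < (∑ i ∈ f.support, |f i|) / 2)
    (hfm : 0 < f m)
    (l : ℕ → ℝ) (hl : ∀ i j, |l i - l j| ≤ if i = j then 0 else h (min i j)) :
    f.sum (fun i a => l i * a) ≤
      ∑ i ∈ Finset.Iio m, |f i| * h i +
        ((∑ i ∈ f.support, |f i|) / 2 - ∑ i ∈ Finset.Iio m, |f i|) * h m := by
  classical
  set B := f.support.filter (fun i => i < m) with hBdef
  set As := f.support.filter (fun i => m < i) with hAsdef
  have hmem : m ∈ f.support := Finsupp.mem_support_iff.mpr (ne_of_gt hfm)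
  -- splitting lemma
  have hsplit : ∀ g : ℕ → ℝ,
      ∑ i ∈ f.support, g i = (∑ i ∈ B, g i) + g m + ∑ j ∈ As, g j := by
    intro g
    rw [← Finset.sum_filter_add_sum_filter_not f.support (fun i => i < m) g]
    have e : f.support.filter (fun i => ¬ i < m) = insert m As := by
      ext x
      constructor
      · intro hx
        obtain ⟨hxs, hxm⟩ := Finset.mem_filter.mp hx
        rcases Nat.lt_or_ge m x with h' | h'
        · refine Finset.mem_insert.mpr (Or.inr ?_)
          rw [hAsdef]; exact Finset.mem_filter.mpr ⟨hxs, h'⟩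
        · exact Finset.mem_insert.mpr (Or.inl (by omega))
      · intro hx
        rcases Finset.mem_insert.mp hx with rfl | hx'
        · exact Finset.mem_filter.mpr ⟨hmem, by omega⟩
        · rw [hAsdef] at hx'
          obtain ⟨hxs, hxm⟩ := Finset.mem_filter.mp hx'
          exact Finset.mem_filter.mpr ⟨hxs, by omega⟩
    have hmnot : m ∉ As := by rw [hAsdef]; simp
    rw [e, Finset.sum_insert hmnot]
    ring
  -- conversions Iio ↔ B
  have hA : ∑ i ∈ Finset.Iio m, |f i| = ∑ i ∈ B, |f i| := by
    rw [hBdef]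
    refine (Finset.sum_subset (fun x hx => Finset.mem_Iio.mpr (Finset.mem_filter.mp hx).2)
      (fun x hx hnx => ?_)).symm
    rw [Finsupp.notMem_support_iff.mp
      (fun hs => hnx (Finset.mem_filter.mpr ⟨hs, Finset.mem_Iio.mp hx⟩)), abs_zero]
  have hHB : ∑ i ∈ Finset.Iio m, |f i| * h i = ∑ i ∈ B, |f i| * h i := by
    rw [hBdef]
    refine (Finset.sum_subset (fun x hx => Finset.mem_Iio.mpr (Finset.mem_filter.mp hx).2)
      (fun x hx hnx => ?_)).symm
    rw [Finsupp.notMem_support_iff.mp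
      (fun hs => hnx (Finset.mem_filter.mpr ⟨hs, Finset.mem_Iio.mp hx⟩)), abs_zero, zero_mul]
  -- basic sum identities
  have hAeq : ∑ i ∈ Finset.Iio m, |f i|
      = (∑ i ∈ B, max (f i) 0) + (∑ i ∈ B, max (-f i) 0) := by
    rw [hA, ← Finset.sum_add_distrib]
    exact Finset.sum_congr rfl fun i _ => habs_split' (f i)
  have hHBeq : ∑ i ∈ Finset.Iio m, |f i| * h i
      = (∑ i ∈ B, max (f i) 0 * h i) + (∑ i ∈ B, max (-f i) 0 * h i) := by
    rw [hHB, ← Finset.sum_add_distrib]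
    refine Finset.sum_congr rfl fun i _ => ?_
    rw [habs_split' (f i)]; ring
  have hSsum : ∑ i ∈ f.support, |f i|
      = ((∑ i ∈ B, max (f i) 0) + (∑ i ∈ B, max (-f i) 0)) + f m
        + ((∑ j ∈ As, max (f j) 0) + (∑ j ∈ As, max (-f j) 0)) := by
    rw [hsplit (fun i => |f i|)]
    have eB : ∑ i ∈ B, |f i| = (∑ i ∈ B, max (f i) 0) + (∑ i ∈ B, max (-f i) 0) := by
      rw [← Finset.sum_add_distrib]; exact Finset.sum_congr rfl fun i _ => habs_split' (f i)
    have eA : ∑ j ∈ As, |f j| = (∑ j ∈ As, max (f j) 0) + (∑ j ∈ As, max (-f j) 0) := by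
      rw [← Finset.sum_add_distrib]; exact Finset.sum_congr rfl fun i _ => habs_split' (f i)
    rw [eB, eA, abs_of_pos hfm]
  have hZero : ((∑ i ∈ B, max (f i) 0) - (∑ i ∈ B, max (-f i) 0)) + f m
      + ((∑ j ∈ As, max (f j) 0) - (∑ j ∈ As, max (-f j) 0)) = 0 := by
    have h0 : ∑ i ∈ f.support, f i = 0 := hf
    rw [hsplit (fun i => f i)] at h0
    have eB : ∑ i ∈ B, f i = (∑ i ∈ B, max (f i) 0) - (∑ i ∈ B, max (-f i) 0) := by
      rw [← Finset.sum_sub_distrib]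
      exact Finset.sum_congr rfl fun i _ => (hpn_split' (f i)).symm
    have eA : ∑ j ∈ As, f j = (∑ j ∈ As, max (f j) 0) - (∑ j ∈ As, max (-f j) 0) := by
      rw [← Finset.sum_sub_distrib]
      exact Finset.sum_congr rfl fun i _ => (hpn_split' (f i)).symm
    linarith [h0, eB, eA]
  -- Lipschitz consequences
  have hlBA : ∀ i ∈ B, ∀ j ∈ As, l i - l j ≤ h i := by
    intro i hi j hj
    rw [hBdef] at hi; rw [hAsdef] at hj
    have him : i < m := (Finset.mem_filter.mp hi).2
    have hjm : m < j := (Finset.mem_filter.mp hj).2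
    have hij : i ≠ j := by omega
    have := hl i j
    rw [if_neg hij, min_eq_left (by omega : i ≤ j)] at this
    linarith [le_abs_self (l i - l j)]
  have hlAB : ∀ i ∈ B, ∀ j ∈ As, l j - l i ≤ h i := by
    intro i hi j hj
    rw [hBdef] at hi; rw [hAsdef] at hj
    have him : i < m := (Finset.mem_filter.mp hi).2
    have hjm : m < j := (Finset.mem_filter.mp hj).2
    have hij : i ≠ j := by omega
    have := hl i j
    rw [if_neg hij, min_eq_left (by omega : i ≤ j)] at this
    have h2 : |l i - l j| = |l j - l i| := abs_sub_comm _ _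
    linarith [le_abs_self (l j - l i)]
  have hlmA : ∀ j ∈ As, l m - l j ≤ h m := by
    intro j hj
    rw [hAsdef] at hj
    have hjm : m < j := (Finset.mem_filter.mp hj).2
    have := hl m j
    rw [if_neg (by omega : m ≠ j), min_eq_left (by omega : m ≤ j)] at this
    linarith [le_abs_self (l m - l j)]
  have hlmB : ∀ i ∈ B, l m - l i ≤ h i := by
    intro i hi
    rw [hBdef] at hi
    have him : i < m := (Finset.mem_filter.mp hi).2
    have := hl i m
    rw [if_neg (by omega : i ≠ m), min_eq_left (by omega : i ≤ m)] at this
    have h2 : |l i - l m| = |l m - l i| := abs_sub_comm _ _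
    linarith [le_abs_self (l m - l i)]
  -- the four transport inequalities
  have I1 : (∑ j ∈ As, max (-f j) 0) * (∑ i ∈ B, max (f i) 0 * l i)
      - (∑ i ∈ B, max (f i) 0) * (∑ j ∈ As, max (-f j) 0 * l j)
      ≤ (∑ j ∈ As, max (-f j) 0) * (∑ i ∈ B, max (f i) 0 * h i) := by
    have e1 : (∑ j ∈ As, max (-f j) 0) * (∑ i ∈ B, max (f i) 0 * l i)
        = ∑ i ∈ B, ∑ j ∈ As, max (f i) 0 * max (-f j) 0 * l i := by
      rw [Finset.sum_mul_sum, Finset.sum_comm]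
      exact Finset.sum_congr rfl fun i _ => Finset.sum_congr rfl fun j _ => by ring
    have e2 : (∑ i ∈ B, max (f i) 0) * (∑ j ∈ As, max (-f j) 0 * l j)
        = ∑ i ∈ B, ∑ j ∈ As, max (f i) 0 * max (-f j) 0 * l j := by
      rw [Finset.sum_mul_sum]
      exact Finset.sum_congr rfl fun i _ => Finset.sum_congr rfl fun j _ => by ring
    have e3 : (∑ j ∈ As, max (-f j) 0) * (∑ i ∈ B, max (f i) 0 * h i)
        = ∑ i ∈ B, ∑ j ∈ As, max (f i) 0 * max (-f j) 0 * h i := by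
      rw [Finset.sum_mul_sum, Finset.sum_comm]
      exact Finset.sum_congr rfl fun i _ => Finset.sum_congr rfl fun j _ => by ring
    rw [e1, e2, e3, ← Finset.sum_sub_distrib]
    simp only [← Finset.sum_sub_distrib]
    refine Finset.sum_le_sum fun i hi => Finset.sum_le_sum fun j hj => ?_
    have hnn : (0:ℝ) ≤ max (f i) 0 * max (-f j) 0 :=
      mul_nonneg (le_max_right _ _) (le_max_right _ _)
    have := mul_le_mul_of_nonneg_left (hlBA i hi j hj) hnn
    nlinarith [this]
  have I2 : (∑ j ∈ As, max (-f j) 0) * l m - (∑ j ∈ As, max (-f j) 0 * l j)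
      ≤ (∑ j ∈ As, max (-f j) 0) * h m := by
    rw [Finset.sum_mul, Finset.sum_mul, ← Finset.sum_sub_distrib]
    refine Finset.sum_le_sum fun j hj => ?_
    have := mul_le_mul_of_nonneg_left (hlmA j hj) (le_max_right (-f j) 0)
    nlinarith [this]
  have I3 : (∑ i ∈ B, max (-f i) 0) * (∑ j ∈ As, max (f j) 0 * l j)
      - (∑ j ∈ As, max (f j) 0) * (∑ i ∈ B, max (-f i) 0 * l i)
      ≤ (∑ j ∈ As, max (f j) 0) * (∑ i ∈ B, max (-f i) 0 * h i) := by
    have e1 : (∑ i ∈ B, max (-f i) 0) * (∑ j ∈ As, max (f j) 0 * l j)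
        = ∑ i ∈ B, ∑ j ∈ As, max (-f i) 0 * max (f j) 0 * l j := by
      rw [Finset.sum_mul_sum]
      exact Finset.sum_congr rfl fun i _ => Finset.sum_congr rfl fun j _ => by ring
    have e2 : (∑ j ∈ As, max (f j) 0) * (∑ i ∈ B, max (-f i) 0 * l i)
        = ∑ i ∈ B, ∑ j ∈ As, max (-f i) 0 * max (f j) 0 * l i := by
      rw [Finset.sum_mul_sum, Finset.sum_comm]
      exact Finset.sum_congr rfl fun i _ => Finset.sum_congr rfl fun j _ => by ring
    have e3 : (∑ j ∈ As, max (f j) 0) * (∑ i ∈ B, max (-f i) 0 * h i)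
        = ∑ i ∈ B, ∑ j ∈ As, max (-f i) 0 * max (f j) 0 * h i := by
      rw [Finset.sum_mul_sum, Finset.sum_comm]
      exact Finset.sum_congr rfl fun i _ => Finset.sum_congr rfl fun j _ => by ring
    rw [e1, e2, e3, ← Finset.sum_sub_distrib]
    simp only [← Finset.sum_sub_distrib]
    refine Finset.sum_le_sum fun i hi => Finset.sum_le_sum fun j hj => ?_
    have hnn : (0:ℝ) ≤ max (-f i) 0 * max (f j) 0 :=
      mul_nonneg (le_max_right _ _) (le_max_right _ _)
    have := mul_le_mul_of_nonneg_left (hlAB i hi j hj) hnn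
    nlinarith [this]
  have I4 : (∑ i ∈ B, max (-f i) 0) * l m - (∑ i ∈ B, max (-f i) 0 * l i)
      ≤ ∑ i ∈ B, max (-f i) 0 * h i := by
    rw [Finset.sum_mul, ← Finset.sum_sub_distrib]
    refine Finset.sum_le_sum fun i hi => ?_
    have := mul_le_mul_of_nonneg_left (hlmB i hi) (le_max_right (-f i) 0)
    nlinarith [this]
  -- scalar facts
  have hPBnn : (0:ℝ) ≤ ∑ i ∈ B, max (f i) 0 :=
    Finset.sum_nonneg fun i _ => le_max_right _ _
  have hNBnn : (0:ℝ) ≤ ∑ i ∈ B, max (-f i) 0 :=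
    Finset.sum_nonneg fun i _ => le_max_right _ _
  have hPAnn : (0:ℝ) ≤ ∑ j ∈ As, max (f j) 0 :=
    Finset.sum_nonneg fun i _ => le_max_right _ _
  have hNAnn : (0:ℝ) ≤ ∑ j ∈ As, max (-f j) 0 :=
    Finset.sum_nonneg fun i _ => le_max_right _ _
  have hT2 : (∑ i ∈ f.support, |f i|) / 2 - ∑ i ∈ Finset.Iio m, |f i|
      = (∑ j ∈ As, max (-f j) 0) - (∑ i ∈ B, max (f i) 0) := by
    linarith [hSsum, hZero, hAeq]
  have hd : 0 < (∑ j ∈ As, max (-f j) 0) - (∑ i ∈ B, max (f i) 0) := by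
    linarith [hm2, hT2]
  have hm1' : (∑ i ∈ f.support, |f i|) / 2 ≤ ∑ i ∈ Finset.Iio m, |f i| + f m := by
    have := Iic_split' f m
    rw [abs_of_pos hfm] at this
    linarith [hm1]
  have hc : 0 ≤ (∑ i ∈ B, max (-f i) 0) - (∑ j ∈ As, max (f j) 0) := by
    linarith [hm1', hSsum, hZero, hAeq]
  have hNA : 0 < ∑ j ∈ As, max (-f j) 0 := by linarith
  -- rewrite the goal
  have hfm_eq : f m = (∑ i ∈ B, max (-f i) 0) + (∑ j ∈ As, max (-f j) 0)
      - (∑ i ∈ B, max (f i) 0) - (∑ j ∈ As, max (f j) 0) := by linarith [hZero]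
  have hLHS : f.sum (fun i a => l i * a)
      = (∑ i ∈ B, max (f i) 0 * l i) - (∑ i ∈ B, max (-f i) 0 * l i)
        + l m * ((∑ i ∈ B, max (-f i) 0) + (∑ j ∈ As, max (-f j) 0)
          - (∑ i ∈ B, max (f i) 0) - (∑ j ∈ As, max (f j) 0))
        + ((∑ j ∈ As, max (f j) 0 * l j) - (∑ j ∈ As, max (-f j) 0 * l j)) := by
    have h0 : f.sum (fun i a => l i * a) = ∑ i ∈ f.support, l i * f i := rfl
    rw [h0, hsplit (fun i => l i * f i), ← hfm_eq]
    have eB : ∑ i ∈ B, l i * f i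
        = (∑ i ∈ B, max (f i) 0 * l i) - (∑ i ∈ B, max (-f i) 0 * l i) := by
      rw [← Finset.sum_sub_distrib]
      refine Finset.sum_congr rfl fun i _ => ?_
      conv_lhs => rw [← hpn_split' (f i)]
      ring
    have eA : ∑ j ∈ As, l j * f j
        = (∑ j ∈ As, max (f j) 0 * l j) - (∑ j ∈ As, max (-f j) 0 * l j) := by
      rw [← Finset.sum_sub_distrib]
      refine Finset.sum_congr rfl fun i _ => ?_
      conv_lhs => rw [← hpn_split' (f i)]
      ring
    rw [eB, eA]
  rw [hLHS, hHBeq, hT2]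
  rcases eq_or_lt_of_le hNBnn with hNB0 | hNBpos
  · -- N_B = 0 case
    have hPA0 : ∑ j ∈ As, max (f j) 0 = 0 := le_antisymm (by linarith) hPAnn
    have hz := (Finset.sum_eq_zero_iff_of_nonneg
      (fun i _ => le_max_right (-f i) 0)).mp hNB0.symm
    have hX2 : ∑ i ∈ B, max (-f i) 0 * l i = 0 :=
      Finset.sum_eq_zero fun i hi => by rw [hz i hi, zero_mul]
    have hH2 : ∑ i ∈ B, max (-f i) 0 * h i = 0 :=
      Finset.sum_eq_zero fun i hi => by rw [hz i hi, zero_mul]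
    have hpz := (Finset.sum_eq_zero_iff_of_nonneg
      (fun (j : ℕ) _ => le_max_right (f j) 0)).mp hPA0
    have hX3 : ∑ j ∈ As, max (f j) 0 * l j = 0 :=
      Finset.sum_eq_zero fun j hj => by rw [hpz j hj, zero_mul]
    have e_lm_NB : l m * (∑ i ∈ B, max (-f i) 0) = 0 := by rw [← hNB0, mul_zero]
    have e_lm_PA : l m * (∑ j ∈ As, max (f j) 0) = 0 := by rw [hPA0, mul_zero]
    have t2' := mul_le_mul_of_nonneg_left I2 (le_of_lt hd)
    have key : (∑ i ∈ B, max (f i) 0 * l i)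
        + l m * ((∑ j ∈ As, max (-f j) 0) - (∑ i ∈ B, max (f i) 0))
        - (∑ j ∈ As, max (-f j) 0 * l j)
        ≤ (∑ i ∈ B, max (f i) 0 * h i)
          + ((∑ j ∈ As, max (-f j) 0) - (∑ i ∈ B, max (f i) 0)) * h m := by
      have big : (∑ j ∈ As, max (-f j) 0)
          * ((∑ i ∈ B, max (f i) 0 * l i)
            + l m * ((∑ j ∈ As, max (-f j) 0) - (∑ i ∈ B, max (f i) 0))
            - (∑ j ∈ As, max (-f j) 0 * l j))
          ≤ (∑ j ∈ As, max (-f j) 0)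
          * ((∑ i ∈ B, max (f i) 0 * h i)
            + ((∑ j ∈ As, max (-f j) 0) - (∑ i ∈ B, max (f i) 0)) * h m) := by
        linarith [I1, t2']
      exact le_of_mul_le_mul_left big hNA
    linarith [key, hX2, hX3, hH2, e_lm_NB, e_lm_PA]
  · -- N_B > 0 case
    have t1 := mul_le_mul_of_nonneg_left I1 (le_of_lt hNBpos)
    have t2 := mul_le_mul_of_nonneg_left I2
      (mul_nonneg (le_of_lt hd) (le_of_lt hNBpos))
    have t3 := mul_le_mul_of_nonneg_left I3 (le_of_lt hNA)
    have t4 := mul_le_mul_of_nonneg_left I4 (mul_nonneg hc (le_of_lt hNA))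
    have big : ((∑ j ∈ As, max (-f j) 0) * (∑ i ∈ B, max (-f i) 0))
        * ((∑ i ∈ B, max (f i) 0 * l i) - (∑ i ∈ B, max (-f i) 0 * l i)
          + l m * ((∑ i ∈ B, max (-f i) 0) + (∑ j ∈ As, max (-f j) 0)
            - (∑ i ∈ B, max (f i) 0) - (∑ j ∈ As, max (f j) 0))
          + ((∑ j ∈ As, max (f j) 0 * l j) - (∑ j ∈ As, max (-f j) 0 * l j)))
        ≤ ((∑ j ∈ As, max (-f j) 0) * (∑ i ∈ B, max (-f i) 0))
        * (((∑ i ∈ B, max (f i) 0 * h i) + (∑ i ∈ B, max (-f i) 0 * h i))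
          + ((∑ j ∈ As, max (-f j) 0) - (∑ i ∈ B, max (f i) 0)) * h m) := by
      linarith [t1, t2, t3, t4]
    have := le_of_mul_le_mul_left big (mul_pos hNA hNBpos)
    linarith [this]

/-- For `M = ℕ` with metric `d(i,j) = h(min i j)` for `i ≠ j`
(`h : ℕ → (1,2)` strictly increasing), let `f ∈ TP(M)` and let `m` be the median of the
support of `f`, i.e. `∑_{i ≤ m} |f i| ≥ ‖f‖₁/2` and `∑_{i < m} |f i| < ‖f‖₁/2`. Then the
transportation cost norm of `f` (expressed by Kantorovich duality as a supremum over
1-Lipschitz functions) equals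
`∑_{i < m} |f i| h(i) + (‖f‖₁/2 − ∑_{i < m} |f i|) h(m)`. -/
theorem stmt19 (h : ℕ → ℝ) (hmono : StrictMono h) (hrange : ∀ n, 1 < h n ∧ h n < 2)
    (f : ℕ →₀ ℝ) (hf : f.sum (fun _ r => r) = 0) (m : ℕ)
    (hm1 : (∑ i ∈ f.support, |f i|) / 2 ≤ ∑ i ∈ Finset.Iic m, |f i|)
    (hm2 : ∑ i ∈ Finset.Iio m, |f i| < (∑ i ∈ f.support, |f i|) / 2) :
    let D : ℕ → ℕ → ℝ := fun i j => if i = j then 0 else h (min i j)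
    sSup {r : ℝ | ∃ l : ℕ → ℝ, (∀ i j, |l i - l j| ≤ D i j) ∧
        r = |f.sum fun i a => l i * a|} =
      ∑ i ∈ Finset.Iio m, |f i| * h i +
        ((∑ i ∈ f.support, |f i|) / 2 - ∑ i ∈ Finset.Iio m, |f i|) * h m := by
  intro D
  have hub : ∀ (l' : ℕ → ℝ), (∀ i j, |l' i - l' j| ≤ if i = j then 0 else h (min i j)) →
      f.sum (fun i a => l' i * a) ≤
        ∑ i ∈ Finset.Iio m, |f i| * h i +
          ((∑ i ∈ f.support, |f i|) / 2 - ∑ i ∈ Finset.Iio m, |f i|) * h m := by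
    intro l' hfe
    rcases lt_trichotomy (f m) 0 with hneg | hzero | hpos
    · -- apply ub to -f with -l'
      have hsupp : (-f).support = f.support := Finsupp.support_neg f
      have hnegapp : ∀ i, (-f) i = -(f i) := fun i => Finsupp.neg_apply f i
      have habs' : ∀ i, |(-f) i| = |f i| := fun i => by rw [hnegapp, abs_neg]
      have hf0 : ∑ i ∈ f.support, f i = 0 := hf
      have hf' : (-f).sum (fun _ r => r) = 0 := by
        show (∑ i ∈ (-f).support, (-f) i) = 0
        rw [hsupp]
        rw [show (∑ i ∈ f.support, (-f) i) = -∑ i ∈ f.support, f i from by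
          rw [← Finset.sum_neg_distrib]
          exact Finset.sum_congr rfl fun i _ => hnegapp i]
        rw [hf0, neg_zero]
      have hm1' : (∑ i ∈ (-f).support, |(-f) i|) / 2 ≤ ∑ i ∈ Finset.Iic m, |(-f) i| := by
        rw [hsupp]; simp only [habs']; exact hm1
      have hm2' : ∑ i ∈ Finset.Iio m, |(-f) i| < (∑ i ∈ (-f).support, |(-f) i|) / 2 := by
        rw [hsupp]; simp only [habs']; exact hm2
      have hfm' : 0 < (-f) m := by rw [hnegapp]; linarith
      have hfeas' : ∀ i j, |(-(l' i)) - (-(l' j))| ≤ if i = j then 0 else h (min i j) := by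
        intro i j
        have e : (-(l' i)) - (-(l' j)) = -(l' i - l' j) := by ring
        rw [e, abs_neg]; exact hfe i j
      have h1 := ub_aux h hmono hrange (-f) hf' m hm1' hm2' hfm' (fun i => -(l' i)) hfeas'
      have hLHSeq : (-f).sum (fun i a => (-(l' i)) * a) = f.sum (fun i a => l' i * a) := by
        show (∑ i ∈ (-f).support, (-(l' i)) * ((-f) i)) = ∑ i ∈ f.support, l' i * f i
        rw [hsupp]
        exact Finset.sum_congr rfl fun i _ => by rw [hnegapp]; ring
      rw [hLHSeq, hsupp] at h1
      simp only [habs'] at h1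
      exact h1
    · exfalso
      have := Iic_split' f m
      rw [hzero, abs_zero] at this
      linarith [hm1, hm2, this]
    · exact ub_aux h hmono hrange f hf m hm1 hm2 hpos l' hfe
  apply IsGreatest.csSup_eq
  constructor
  · obtain ⟨l₀, hfeas, hval⟩ := mem_aux h hmono hrange f m
    exact ⟨l₀, hfeas, hval⟩
  · rintro r ⟨l, hlfeas, rfl⟩
    have hl' : ∀ i j, |l i - l j| ≤ if i = j then 0 else h (min i j) := hlfeas
    have h1 := hub l hl'
    have h2 := hub (fun i => -(l i)) (by
      intro i j
      have e : (-(l i)) - (-(l j)) = -(l i - l j) := by ring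
      rw [e, abs_neg]; exact hl' i j)
    have h2' : -(f.sum fun i a => l i * a) ≤
        ∑ i ∈ Finset.Iio m, |f i| * h i +
          ((∑ i ∈ f.support, |f i|) / 2 - ∑ i ∈ Finset.Iio m, |f i|) * h m := by
      have e : (f.sum fun i a => (-(l i)) * a) = -(f.sum fun i a => l i * a) := by
        show (∑ i ∈ f.support, (-(l i)) * f i) = -∑ i ∈ f.support, l i * f i
        rw [← Finset.sum_neg_distrib]
        exact Finset.sum_congr rfl fun i _ => by ring
      rw [e] at h2
      exact h2
    exact abs_le.mpr ⟨by linarith [h2'], h1⟩
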